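/- For every super decomposition (I_1,...,I_n) of [q], the polynomial f_{I_1,...,I_n}(x_1,...,x_n) = ∏_{j=1}^n ∏_{t ∈ i(I_j)} (x_j − t) vanishes at every point of SJ(n,q). -/

import Mathlib

theorem stmt_18 {F : Type*} [Field F] (n q : ℕ) (hn : 1 ≤ n) (hnq : n ≤ q)
    (i : Fin q → F) (hi : Function.Injective i)
    (js : Fin (n + 1) → ℕ) (hjs : StrictMono js)
    (h0 : js 0 = 0) (hlast : js (Fin.last n) = q + 1)
    (v : Fin n → Fin q) (hv : StrictMono v) :
    MvPolynomial.eval (fun j => i (v j))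
      (∏ m : Fin n, ∏ t ∈ Finset.univ.filter
        (fun t : Fin q => js m.castSucc < t.val + 1 ∧ t.val + 1 < js m.succ),
        (MvPolynomial.X m - MvPolynomial.C (i t))) = 0 := by
  have key : ∃ m : Fin n, js m.castSucc < (v m).val + 1 ∧ (v m).val + 1 < js m.succ := by
    by_contra h
    push_neg at h
    have step : ∀ k (hk : k < n), js ⟨k + 1, by omega⟩ ≤ (v ⟨k, hk⟩).val + 1 := by
      intro k
      induction k with
      | zero =>
        intro hk
        have h1 : js (Fin.castSucc ⟨0, hk⟩) < (v ⟨0, hk⟩).val + 1 := by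
          have : js (Fin.castSucc ⟨0, hk⟩) = 0 := by
            convert h0 using 2
            ext; simp
          omega
        have := h ⟨0, hk⟩ h1
        exact this
      | succ k ih =>
        intro hk
        have hk' : k < n := by omega
        have ih' := ih hk'
        have hvv : v ⟨k, hk'⟩ < v ⟨k + 1, hk⟩ := hv (by simp [Fin.lt_def])
        have h1 : js (Fin.castSucc ⟨k + 1, hk⟩) < (v ⟨k + 1, hk⟩).val + 1 := by
          have : js (Fin.castSucc ⟨k + 1, hk⟩) = js ⟨k + 1, by omega⟩ := rfl
          rw [this]
          have : (v ⟨k, hk'⟩).val < (v ⟨k + 1, hk⟩).val := hvv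
          omega
        have := h ⟨k + 1, hk⟩ h1
        exact this
    have hlst := step (n - 1) (by omega)
    have : (⟨n - 1 + 1, by omega⟩ : Fin (n + 1)) = Fin.last n := by
      ext; simp; omega
    rw [this, hlast] at hlst
    have := (v ⟨n - 1, by omega⟩).isLt
    omega
  obtain ⟨m, hm⟩ := key
  rw [MvPolynomial.eval_prod]
  apply Finset.prod_eq_zero (Finset.mem_univ m)
  rw [MvPolynomial.eval_prod]
  apply Finset.prod_eq_zero (i := v m) (by simp [hm]; omega)
  simp
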